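/- Let ρ and λ respectively denote rightmost and leftmost disjoint optimizers. For f with cadlag coordinates of nonnegative jumps on [0,t], let Rf denote the 180-degree rotation of the measure df on [0,t]×{1,…,n}. Then for any endpoint vectors x, y: the leftmost optimizer in Rf between rotated endpoints is the rotation of the rightmost optimizer in f, i.e., λ_{Rf}(Rx, Ry) = R(ρ_f(x,y)), and symmetrically ρ_{Rf}(Rx,Ry) = R(λ_f(x,y)). -/

import Mathlib

open Filter Set
open Topology

/-- Left limit with the convention `f(0⁻) = 0`. -/
noncomputable def lml (f : ℝ → ℝ) (z : ℝ) : ℝ := if z ≤ 0 then 0 else Function.leftLim f z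

/-- Cadlag on `[0, ∞)`: right-continuous at every `x ≥ 0`, left limits exist at every `x > 0`. -/
def Cadlag (f : ℝ → ℝ) : Prop :=
  (∀ x : ℝ, 0 ≤ x → ContinuousWithinAt f (Set.Ici x) x) ∧
  (∀ x : ℝ, 0 < x → ∃ l : ℝ, Filter.Tendsto f (nhdsWithin x (Set.Iio x)) (nhds l))

/-- All jumps are nonnegative (with the convention `f(0⁻) = 0`). -/
def NonnegJumps (f : ℝ → ℝ) : Prop := ∀ z : ℝ, 0 ≤ z → lml f z ≤ f z

/-- `S f₁ f₂ x y = sup_{z ∈ [x,y]} (f₂ z - f₁ (z⁻))`. -/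
noncomputable def S (f₁ f₂ : ℝ → ℝ) (x y : ℝ) : ℝ :=
  sSup ((fun z => f₂ z - lml f₁ z) '' Set.Icc x y)

/-- `Sm f₁ f₂ x y = sup_{z ∈ [x,y)} (f₂ z - f₁ (z⁻))`. -/
noncomputable def Sm (f₁ f₂ : ℝ → ℝ) (x y : ℝ) : ℝ :=
  sSup ((fun z => f₂ z - lml f₁ z) '' Set.Ico x y)

/-- Jump times of an ordered, essentially disjoint `k`-tuple of paths from `(x j, n)` to
`(y j, 1)`. Path `j` occupies line `i ∈ {1,…,n}` on `[u j i, u j (i-1)]`. -/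
def IsTupleG (n k : ℕ) (x y : Fin k → ℝ) (u : Fin k → ℕ → ℝ) : Prop :=
  (∀ j, u j n = x j) ∧ (∀ j, u j 0 = y j) ∧
  (∀ j, ∀ i : ℕ, i < n → u j (i + 1) ≤ u j i) ∧
  (∀ j : Fin k, ∀ hj : j.val + 1 < k, ∀ i : ℕ, i < n →
    u j i ≤ u ⟨j.val + 1, hj⟩ (i + 1))

/-- The measure `df` of the union of the paths of a disjoint `k`-tuple. -/
noncomputable def unionLen (f : ℕ → ℝ → ℝ) (n k : ℕ) (u : Fin k → ℕ → ℝ) : ℝ :=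
  ∑ i ∈ Finset.Icc 1 n,
    ((∑ j : Fin k, (f i (u j (i - 1)) - lml (f i) (u j i)))
      - ∑ j : Fin k, (if hj : j.val + 1 < k then
          (if u j (i - 1) = u ⟨j.val + 1, hj⟩ i then
            f i (u j (i - 1)) - lml (f i) (u j (i - 1)) else 0)
        else 0))

/-- Disjoint optimizer from `(x, n)` to `(y, 1)` across `f`. -/
def IsOptG (f : ℕ → ℝ → ℝ) (n k : ℕ) (x y : Fin k → ℝ) (u : Fin k → ℕ → ℝ) : Prop :=
  IsTupleG n k x y u ∧ ∀ s : Fin k → ℕ → ℝ, IsTupleG n k x y s →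
    unionLen f n k s ≤ unionLen f n k u

/-- Rightmost optimizer: an optimizer to the right of every optimizer. -/
def IsRightmostOpt (f : ℕ → ℝ → ℝ) (n k : ℕ) (x y : Fin k → ℝ) (u : Fin k → ℕ → ℝ) : Prop :=
  IsOptG f n k x y u ∧ ∀ s : Fin k → ℕ → ℝ, IsOptG f n k x y s →
    ∀ (j : Fin k) (i : ℕ), i ≤ n → s j i ≤ u j i

/-- Leftmost optimizer: an optimizer to the left of every optimizer. -/
def IsLeftmostOpt (f : ℕ → ℝ → ℝ) (n k : ℕ) (x y : Fin k → ℝ) (u : Fin k → ℕ → ℝ) : Prop :=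
  IsOptG f n k x y u ∧ ∀ s : Fin k → ℕ → ℝ, IsOptG f n k x y s →
    ∀ (j : Fin k) (i : ℕ), i ≤ n → u j i ≤ s j i

/-- The 180 degree rotation `Rf` of the environment `f` on `[0,T] × {1,…,n}`:
`d(Rf)([a,b] × {i}) = df([T-b, T-a] × {n+1-i})`. -/
noncomputable def rotF (f : ℕ → ℝ → ℝ) (n : ℕ) (T : ℝ) : ℕ → ℝ → ℝ :=
  fun i s => f (n + 1 - i) T - lml (f (n + 1 - i)) (T - s)

/-- The 180 degree rotation of a `k`-tuple of paths. -/
def rotTup (n k : ℕ) (T : ℝ) (u : Fin k → ℕ → ℝ) : Fin k → ℕ → ℝ :=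
  fun j i => T - u (Fin.rev j) (n - i)

lemma leftLim_tendsto_right (f : ℝ → ℝ) (hf : Cadlag f) (w : ℝ) (hw : 0 ≤ w) :
    Filter.Tendsto (Function.leftLim f) (nhdsWithin w (Set.Ioi w)) (nhds (f w)) := by
  rw [Metric.tendsto_nhdsWithin_nhds]
  intro ε hε
  have hrc := hf.1 w hw
  rw [Metric.continuousWithinAt_iff] at hrc
  obtain ⟨δ, hδ, hδ'⟩ := hrc (ε/2) (by positivity)
  refine ⟨δ, hδ, fun {w'} hw1 hw2 => ?_⟩
  have hww' : w < w' := hw1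
  obtain ⟨l, hl⟩ := hf.2 w' (lt_of_le_of_lt hw hww')
  have hll : Function.leftLim f w' = l :=
    leftLim_eq_of_tendsto hl
  rw [hll]
  have key : dist l (f w) ≤ ε/2 := by
    have hd : Tendsto (fun s => dist (f s) (f w)) (𝓝[<] w') (𝓝 (dist l (f w))) :=
      hl.dist tendsto_const_nhds
    apply le_of_tendsto hd
    filter_upwards [Ioo_mem_nhdsLT_of_mem (⟨hww', le_refl w'⟩ : w' ∈ Set.Ioc w w')] with s hs
    have hsw : w < s := hs.1
    have hsd : dist s w < δ := by
      rw [Real.dist_eq] at hw2 ⊢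
      rw [abs_of_pos (by linarith)] at hw2 ⊢
      linarith [hs.2]
    exact le_of_lt (hδ' (le_of_lt hsw) hsd)
  linarith [key]

lemma lml_rot (g : ℝ → ℝ) (hg : Cadlag g) (T w : ℝ) (hw : 0 ≤ w) (hwT : w ≤ T) :
    lml (fun s => g T - lml g (T - s)) (T - w) = g T - g w := by
  by_cases hzw : T - w ≤ 0
  · have hwt : w = T := by linarith
    subst hwt
    simp [lml]
  · push_neg at hzw
    have h1 : Tendsto (fun s => T - s) (𝓝[<] (T - w)) (𝓝[>] w) := by
      rw [tendsto_nhdsWithin_iff]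
      constructor
      · have : Tendsto (fun s : ℝ => T - s) (𝓝 (T - w)) (𝓝 (T - (T - w))) :=
          (continuous_const.sub continuous_id).tendsto (T - w)
        rw [show T - (T - w) = w by ring] at this
        exact this.mono_left nhdsWithin_le_nhds
      · filter_upwards [self_mem_nhdsWithin] with s hs
        simp only [Set.mem_Iio] at hs
        simp only [Set.mem_Ioi]
        linarith
    have h2 : Tendsto (lml g) (𝓝[>] w) (𝓝 (g w)) := by
      apply (leftLim_tendsto_right g hg w hw).congr'
      filter_upwards [self_mem_nhdsWithin] with s hs
      simp only [Set.mem_Ioi] at hs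
      rw [lml, if_neg (by linarith)]
    have h3 : Tendsto (fun s => g T - lml g (T - s)) (𝓝[<] (T - w)) (𝓝 (g T - g w)) :=
      tendsto_const_nhds.sub (h2.comp h1)
    have h4 : Function.leftLim (fun s => g T - lml g (T - s)) (T - w) = g T - g w :=
      leftLim_eq_of_tendsto h3
    rw [lml, if_neg (by linarith), h4]

lemma isTupleG_rot (n k : ℕ) (T : ℝ) (x y : Fin k → ℝ) (u : Fin k → ℕ → ℝ)
    (h : IsTupleG n k x y u) :
    IsTupleG n k (fun j => T - y (Fin.rev j)) (fun j => T - x (Fin.rev j)) (rotTup n k T u) := by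
  obtain ⟨h1, h2, h3, h4⟩ := h
  refine ⟨fun j => ?_, fun j => ?_, fun j i hi => ?_, fun j hj i hi => ?_⟩
  · simp [rotTup, Nat.sub_self, h2]
  · simp [rotTup, Nat.sub_zero, h1]
  · have key := h3 (Fin.rev j) (n - i - 1) (by omega)
    simp only [rotTup]
    have e1 : n - (i+1) = n - i - 1 := by omega
    have e2 : n - i - 1 + 1 = n - i := by omega
    rw [e1]
    rw [e2] at key
    linarith
  · set j' : Fin k := Fin.rev (⟨j.val+1, hj⟩ : Fin k) with hj'def
    have hj'v : j'.val = k - (j.val + 2) := by simp [hj'def, Fin.val_rev]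
    have hj'lt : j'.val + 1 < k := by omega
    have hrev : (⟨j'.val + 1, hj'lt⟩ : Fin k) = Fin.rev j := by
      apply Fin.ext
      simp [Fin.val_rev]
      omega
    have key := h4 j' hj'lt (n - i - 1) (by omega)
    rw [hrev] at key
    simp only [rotTup]
    have e1 : n - (i+1) = n - i - 1 := by omega
    have e2 : n - i - 1 + 1 = n - i := by omega
    rw [e1, ← hj'def]
    rw [e2] at key
    linarith

lemma tuple_bounds (n k : ℕ) (x y : Fin k → ℝ) (u : Fin k → ℕ → ℝ)
    (h : IsTupleG n k x y u) : ∀ j, ∀ i ≤ n, x j ≤ u j i ∧ u j i ≤ y j := by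
  obtain ⟨h1, h2, h3, h4⟩ := h
  intro j
  have key : ∀ b ≤ n, ∀ a ≤ b, u j b ≤ u j a := by
    intro b
    induction b with
    | zero => intro _ a ha; interval_cases a; exact le_refl _
    | succ b ih =>
      intro hb a ha
      rcases Nat.lt_or_ge a (b+1) with h' | h'
      · exact le_trans (h3 j b (by omega)) (ih (by omega) a (by omega))
      · have : a = b + 1 := by omega
        subst this; exact le_refl _
  intro i hi
  constructor
  · rw [← h1 j]; exact key n (le_refl n) i hi
  · rw [← h2 j]; exact key i hi 0 (Nat.zero_le _)

lemma rotTup_rotTup (n k : ℕ) (T : ℝ) (u : Fin k → ℕ → ℝ) :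
    ∀ j, ∀ i ≤ n, rotTup n k T (rotTup n k T u) j i = u j i := by
  intro j i hi
  simp [rotTup, Fin.rev_rev, Nat.sub_sub_self hi]

lemma isTupleG_congr (n k : ℕ) (x y : Fin k → ℝ) (u v : Fin k → ℕ → ℝ)
    (huv : ∀ j, ∀ i ≤ n, u j i = v j i) (h : IsTupleG n k x y u) : IsTupleG n k x y v := by
  obtain ⟨h1, h2, h3, h4⟩ := h
  refine ⟨fun j => ?_, fun j => ?_, fun j i hi => ?_, fun j hj i hi => ?_⟩
  · rw [← huv j n (le_refl n)]; exact h1 j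
  · rw [← huv j 0 (Nat.zero_le n)]; exact h2 j
  · rw [← huv j (i+1) (by omega), ← huv j i (by omega)]; exact h3 j i hi
  · rw [← huv j i (by omega), ← huv ⟨j.val+1, hj⟩ (i+1) (by omega)]; exact h4 j hj i hi

lemma unionLen_congr (f : ℕ → ℝ → ℝ) (n k : ℕ) (u v : Fin k → ℕ → ℝ)
    (huv : ∀ j, ∀ i ≤ n, u j i = v j i) : unionLen f n k u = unionLen f n k v := by
  unfold unionLen
  refine Finset.sum_congr rfl (fun i hi => ?_)
  simp only [Finset.mem_Icc] at hi
  congr 1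
  · refine Finset.sum_congr rfl (fun j _ => ?_)
    rw [huv j (i-1) (by omega), huv j i (by omega)]
  · refine Finset.sum_congr rfl (fun j _ => ?_)
    by_cases hj : j.val + 1 < k
    · rw [dif_pos hj, dif_pos hj, huv j (i-1) (by omega), huv ⟨j.val+1, hj⟩ i (by omega)]
    · rw [dif_neg hj, dif_neg hj]

lemma unionLen_rot (n k : ℕ) (hn : 1 ≤ n) (hk : 1 ≤ k) (T : ℝ) (f : ℕ → ℝ → ℝ)
    (hcad : ∀ i, 1 ≤ i → i ≤ n → Cadlag (f i))
    (u : Fin k → ℕ → ℝ) (h0 : ∀ j, ∀ i ≤ n, 0 ≤ u j i) (hT : ∀ j, ∀ i ≤ n, u j i ≤ T) :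
    unionLen (rotF f n T) n k (rotTup n k T u) = unionLen f n k u := by
  unfold unionLen
  refine Finset.sum_nbij' (fun i => n + 1 - i) (fun i => n + 1 - i) ?_ ?_ ?_ ?_ ?_
  · intro a ha; simp only [Finset.mem_Icc] at *; omega
  · intro a ha; simp only [Finset.mem_Icc] at *; omega
  · intro a ha; simp only [Finset.mem_Icc] at ha; show n + 1 - (n + 1 - a) = a; omega
  · intro a ha; simp only [Finset.mem_Icc] at ha; show n + 1 - (n + 1 - a) = a; omega
  · intro i hi
    simp only [Finset.mem_Icc] at hi
    set m := n + 1 - i with hm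
    have hm1 : 1 ≤ m := by omega
    have hmn : m ≤ n := by omega
    have hv1 : ∀ j : Fin k, rotTup n k T u j (i-1) = T - u (Fin.rev j) m := by
      intro j; simp only [rotTup]; congr 2; omega
    have hv2 : ∀ j : Fin k, rotTup n k T u j i = T - u (Fin.rev j) (m-1) := by
      intro j; simp only [rotTup]; congr 2; omega
    have hgapp : ∀ a : ℝ, rotF f n T i (T - a) = f m T - lml (f m) a := by
      intro a; simp only [rotF, ← hm]; rw [show T - (T - a) = a by ring]
    have hglml : ∀ w : ℝ, 0 ≤ w → w ≤ T → lml (rotF f n T i) (T - w) = f m T - f m w := by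
      intro w hw1 hw2
      have hfun : rotF f n T i = fun s => f m T - lml (f m) (T - s) := by
        funext s; simp only [rotF, ← hm]
      rw [hfun]
      exact lml_rot (f m) (hcad m hm1 hmn) T w hw1 hw2
    congr 1
    · refine Fintype.sum_bijective Fin.rev Fin.rev_bijective _ _ (fun j => ?_)
      rw [hv1 j, hv2 j, hgapp, hglml _ (h0 _ _ (by omega)) (hT _ _ (by omega))]
      ring
    · have hkpos : 0 < k := hk
      refine Fintype.sum_bijective
        (fun j : Fin k => Fin.rev (⟨(j.val + 1) % k, Nat.mod_lt _ hkpos⟩ : Fin k))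
        ?_ _ _ (fun j => ?_)
      · rw [← Finite.injective_iff_bijective]
        intro a b hab
        have ha := a.isLt
        have hb := b.isLt
        beta_reduce at hab
        have hmod := Fin.rev_injective hab
        simp only [Fin.mk.injEq] at hmod
        have ea : (a.val + 1) % k = if a.val + 1 < k then a.val + 1 else 0 := by
          split_ifs with h'
          · exact Nat.mod_eq_of_lt h'
          · have hek : a.val + 1 = k := by omega
            rw [hek, Nat.mod_self]
        have eb : (b.val + 1) % k = if b.val + 1 < k then b.val + 1 else 0 := by
          split_ifs with h'
          · exact Nat.mod_eq_of_lt h'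
          · have hek : b.val + 1 = k := by omega
            rw [hek, Nat.mod_self]
        rw [ea, eb] at hmod
        apply Fin.ext
        split_ifs at hmod <;> omega
      · beta_reduce
        by_cases hj : j.val + 1 < k
        · have hj'lt0 : k - 2 - j.val < k := by omega
          have hidx : Fin.rev (⟨(j.val + 1) % k, Nat.mod_lt _ hkpos⟩ : Fin k)
              = (⟨k - 2 - j.val, hj'lt0⟩ : Fin k) := by
            apply Fin.ext
            simp only [Fin.val_rev]
            rw [Nat.mod_eq_of_lt hj]
            omega
          rw [hidx, dif_pos hj]
          have hj'lt : (k - 2 - j.val) + 1 < k := by omega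
          rw [dif_pos hj'lt]
          have hrev1 : Fin.rev j = (⟨(k - 2 - j.val) + 1, hj'lt⟩ : Fin k) := by
            apply Fin.ext
            simp only [Fin.val_rev]
            omega
          have hrev2 : Fin.rev (⟨j.val + 1, hj⟩ : Fin k) = (⟨k - 2 - j.val, hj'lt0⟩ : Fin k) := by
            apply Fin.ext
            simp only [Fin.val_rev]
            omega
          have hcond : (rotTup n k T u j (i-1) = rotTup n k T u ⟨j.val+1, hj⟩ i)
              ↔ (u ⟨k - 2 - j.val, hj'lt0⟩ (m-1) = u ⟨(k - 2 - j.val) + 1, hj'lt⟩ m) := by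
            rw [hv1 j, hv2 ⟨j.val+1, hj⟩, hrev1, hrev2]
            constructor
            · intro h
              have := sub_right_injective h
              linarith [this]
            · intro h; rw [h]
          by_cases hcnd : u ⟨k - 2 - j.val, hj'lt0⟩ (m-1) = u ⟨(k - 2 - j.val) + 1, hj'lt⟩ m
          · rw [if_pos (hcond.mpr hcnd), if_pos hcnd]
            have harg : rotTup n k T u j (i-1) = T - u ⟨k - 2 - j.val, hj'lt0⟩ (m-1) := by
              rw [hv1 j, hrev1, ← hcnd]
            rw [harg, hgapp, hglml _ (h0 _ _ (by omega)) (hT _ _ (by omega))]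
            ring
          · rw [if_neg (fun hc => hcnd (hcond.mp hc)), if_neg hcnd]
        · rw [dif_neg hj]
          have hjk : j.val + 1 = k := by have := j.isLt; omega
          have hidx : Fin.rev (⟨(j.val + 1) % k, Nat.mod_lt _ hkpos⟩ : Fin k)
              = (⟨k - 1, by omega⟩ : Fin k) := by
            apply Fin.ext
            simp only [Fin.val_rev]
            rw [hjk, Nat.mod_self]
          rw [hidx, dif_neg (by simp; omega : ¬ ((⟨k - 1, by omega⟩ : Fin k).val + 1 < k))]

theorem stmt18 (n k : ℕ) (hn : 1 ≤ n) (hk : 1 ≤ k) (T : ℝ) (hT : 0 ≤ T)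
    (f : ℕ → ℝ → ℝ)
    (hcad : ∀ i : ℕ, 1 ≤ i → i ≤ n → Cadlag (f i))
    (hjmp : ∀ i : ℕ, 1 ≤ i → i ≤ n → NonnegJumps (f i))
    (x y : Fin k → ℝ) (hx0 : ∀ j, 0 ≤ x j) (hxy : ∀ j, x j ≤ y j) (hyT : ∀ j, y j ≤ T) :
    (∀ u : Fin k → ℕ → ℝ, IsRightmostOpt f n k x y u →
      IsLeftmostOpt (rotF f n T) n k
        (fun j => T - y (Fin.rev j)) (fun j => T - x (Fin.rev j)) (rotTup n k T u)) ∧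
    (∀ u : Fin k → ℕ → ℝ, IsLeftmostOpt f n k x y u →
      IsRightmostOpt (rotF f n T) n k
        (fun j => T - y (Fin.rev j)) (fun j => T - x (Fin.rev j)) (rotTup n k T u)) := by
  set x' : Fin k → ℝ := fun j => T - y (Fin.rev j) with hx'
  set y' : Fin k → ℝ := fun j => T - x (Fin.rev j) with hy'
  -- bounds for tuples with endpoints x, y
  have hbd : ∀ u : Fin k → ℕ → ℝ, IsTupleG n k x y u →
      (∀ j, ∀ i ≤ n, 0 ≤ u j i) ∧ (∀ j, ∀ i ≤ n, u j i ≤ T) := by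
    intro u hu
    constructor
    · intro j i hi
      have := (tuple_bounds n k x y u hu j i hi).1
      linarith [hx0 j]
    · intro j i hi
      have := (tuple_bounds n k x y u hu j i hi).2
      linarith [hyT j]
  have hlen : ∀ u : Fin k → ℕ → ℝ, IsTupleG n k x y u →
      unionLen (rotF f n T) n k (rotTup n k T u) = unionLen f n k u := by
    intro u hu
    exact unionLen_rot n k hn hk T f hcad u (hbd u hu).1 (hbd u hu).2
  have htup : ∀ u : Fin k → ℕ → ℝ, IsTupleG n k x y u →
      IsTupleG n k x' y' (rotTup n k T u) := fun u hu => isTupleG_rot n k T x y u hu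
  have htup' : ∀ s : Fin k → ℕ → ℝ, IsTupleG n k x' y' s →
      IsTupleG n k x y (rotTup n k T s) := by
    intro s hs
    have h1 := isTupleG_rot n k T x' y' s hs
    have ex : (fun j => T - y' (Fin.rev j)) = x := by
      funext j; simp [hy', Fin.rev_rev]
    have ey : (fun j => T - x' (Fin.rev j)) = y := by
      funext j; simp [hx', Fin.rev_rev]
    rwa [ex, ey] at h1
  have hlen' : ∀ s : Fin k → ℕ → ℝ, IsTupleG n k x' y' s →
      unionLen (rotF f n T) n k s = unionLen f n k (rotTup n k T s) := by
    intro s hs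
    have h1 := hlen (rotTup n k T s) (htup' s hs)
    have h2 : unionLen (rotF f n T) n k (rotTup n k T (rotTup n k T s))
        = unionLen (rotF f n T) n k s :=
      unionLen_congr _ n k _ _ (rotTup_rotTup n k T s)
    rw [h2] at h1
    exact h1
  have hopt : ∀ u : Fin k → ℕ → ℝ, IsOptG f n k x y u →
      IsOptG (rotF f n T) n k x' y' (rotTup n k T u) := by
    intro u hu
    refine ⟨htup u hu.1, fun s hs => ?_⟩
    rw [hlen' s hs, hlen u hu.1]
    exact hu.2 (rotTup n k T s) (htup' s hs)
  have hopt' : ∀ s : Fin k → ℕ → ℝ, IsOptG (rotF f n T) n k x' y' s →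
      IsOptG f n k x y (rotTup n k T s) := by
    intro s hs
    refine ⟨htup' s hs.1, fun t ht => ?_⟩
    have h1 := hs.2 (rotTup n k T t) (htup t ht)
    rw [hlen t ht, hlen' s hs.1] at h1
    exact h1
  constructor
  · intro u hu
    refine ⟨hopt u hu.1, fun s hs j i hi => ?_⟩
    have h1 := hu.2 (rotTup n k T s) (hopt' s hs) (Fin.rev j) (n - i) (by omega)
    have h2 : s j i = T - rotTup n k T s (Fin.rev j) (n - i) := by
      have := rotTup_rotTup n k T s j i hi
      simp only [rotTup] at this ⊢
      linarith [this]
    show T - u (Fin.rev j) (n - i) ≤ s j i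
    rw [h2]
    linarith
  · intro u hu
    refine ⟨hopt u hu.1, fun s hs j i hi => ?_⟩
    have h1 := hu.2 (rotTup n k T s) (hopt' s hs) (Fin.rev j) (n - i) (by omega)
    have h2 : s j i = T - rotTup n k T s (Fin.rev j) (n - i) := by
      have := rotTup_rotTup n k T s j i hi
      simp only [rotTup] at this ⊢
      linarith [this]
    show s j i ≤ T - u (Fin.rev j) (n - i)
    rw [h2]
    linarith
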